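/- arXiv:1303.0002 — 5 statements merged into one kernel-verified Lean document; each statement's English description precedes it below -/
import Mathlib

section
/- Let C = (C_1, ..., C_m) be an equitable partition of the n-cube with quotient matrix S, fix a vertex v and index j, and let W_{v,j}^{r_1,r_2,r_3} = (W_{v,j1}^{r_1,r_2,r_3}, ..., W_{v,jm}^{r_1,r_2,r_3}) where W_{v,jk}^{r_1,r_2,r_3} counts pairs (x,y) with x ∈ C_j, y ∈ C_k, d(v,y) = r_1+r_3, d(x,y) = r_2+r_3, d(v,x) = r_1+r_2. Then W_{v,j}^{r_1,r_2,r_3} · S = (r_1+1) W_{v,j}^{r_1+1,r_2-1,r_3} + (r_2+1) W_{v,j}^{r_1-1,r_2+1,r_3} + (r_3+1) W_{v,j}^{r_1,r_2,r_3+1} + (n - r_1 - r_2 - r_3 + 1) W_{v,j}^{r_1,r_2,r_3-1}, where terms with a negative index are zero vectors. -/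
/-- `W_{v,jk}^{r_1,r_2,r_3}`: the number of pairs `(x,y)` with `x ∈ C j`, `y ∈ C k`,
`d(v,y) = r_1+r_3`, `d(x,y) = r_2+r_3`, `d(v,x) = r_1+r_2` (indices in `ℤ`; for a
negative index the count is automatically zero). -/
def Wdist {n m : ℕ} (C : Fin m → Finset (Fin n → Bool)) (v : Fin n → Bool)
    (j : Fin m) (r1 r2 r3 : ℤ) (k : Fin m) : ℤ :=
  ((Finset.univ ×ˢ Finset.univ).filter fun p : (Fin n → Bool) × (Fin n → Bool) =>
    p.1 ∈ C j ∧ p.2 ∈ C k ∧ (hammingDist v p.2 : ℤ) = r1 + r3 ∧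
      (hammingDist p.1 p.2 : ℤ) = r2 + r3 ∧
      (hammingDist v p.1 : ℤ) = r1 + r2).card

namespace WdistAux

open Finset

variable {n : ℕ}

open Classical in
/-- indicator of a proposition, valued in `ℤ`. -/
noncomputable def ind (P : Prop) : ℤ := if P then 1 else 0

lemma ind_congr {P Q : Prop} (h : P ↔ Q) : ind P = ind Q := congrArg ind (propext h)

lemma ind_pos {P : Prop} (h : P) : ind P = 1 := by simp [ind, h]
lemma ind_neg {P : Prop} (h : ¬ P) : ind P = 0 := by simp [ind, h]

lemma ind_and (P Q : Prop) : ind (P ∧ Q) = ind P * ind Q := by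
  by_cases hP : P <;> by_cases hQ : Q <;> simp [ind, hP, hQ]

lemma card_filter_ind {α : Type*} (s : Finset α) (p : α → Prop) [DecidablePred p] :
    ((s.filter p).card : ℤ) = ∑ a ∈ s, ind (p a) := by
  rw [Finset.card_filter]
  push_cast
  refine Finset.sum_congr rfl fun a _ => ?_
  by_cases h : p a <;> simp [ind, h]

lemma hd_card (u z : Fin n → Bool) :
    hammingDist u z = (univ.filter fun t => u t ≠ z t).card := rfl

lemma dist_update (u z : Fin n → Bool) (i : Fin n) :
    (hammingDist u (Function.update z i (!z i)) : ℤ)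
      = hammingDist u z + (if u i = z i then 1 else -1) := by
  have hfil : (univ.filter fun t => u t ≠ Function.update z i (!z i) t)
      = if u i = z i then insert i (univ.filter fun t => u t ≠ z t)
        else (univ.filter fun t => u t ≠ z t).erase i := by
    split_ifs with h
    · ext t
      by_cases ht : t = i
      · simp only [ht, Function.update_self, mem_insert, mem_filter, mem_univ, true_and]
        cases hu : u i <;> cases hz : z i <;> simp_all
      · simp [Function.update_of_ne ht, ht]
    · ext t
      by_cases ht : t = i
      · simp only [ht, Function.update_self, mem_erase, mem_filter, mem_univ, true_and]
        cases hu : u i <;> cases hz : z i <;> simp_all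
      · simp [Function.update_of_ne ht, ht]
  rw [hd_card, hd_card, hfil]
  split_ifs with h
  · rw [card_insert_of_notMem (by simp [h])]
    push_cast; ring
  · rw [card_erase_of_mem (by simp [h])]
    have : 0 < (univ.filter fun t => u t ≠ z t).card := card_pos.2 ⟨i, by simp [h]⟩
    push_cast [this]
    omega

lemma flip_dist_one (z : Fin n → Bool) (i : Fin n) :
    hammingDist (Function.update z i (!z i)) z = 1 := by
  rw [hd_card, card_eq_one]
  refine ⟨i, ?_⟩
  ext t
  by_cases ht : t = i
  · simp [ht, Function.update_self]
  · simp [Function.update_of_ne ht, ht]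

lemma flip_injective (z : Fin n → Bool) :
    Function.Injective (fun i : Fin n => Function.update z i (!z i)) := by
  intro i i' h
  by_contra hne
  have h1 : (!z i) = Function.update z i' (!z i') i := by
    have := congrFun h i
    simpa using this
  rw [Function.update_of_ne hne] at h1
  exact (by cases z i <;> simp_all : False)

lemma exists_flip {y z : Fin n → Bool} (h : hammingDist y z = 1) :
    ∃ i, y = Function.update z i (!z i) := by
  rw [hd_card, card_eq_one] at h
  obtain ⟨i, hi⟩ := h
  refine ⟨i, funext fun t => ?_⟩
  by_cases ht : t = i
  · have : t ∈ (univ.filter fun t => y t ≠ z t) := by rw [hi]; simp [ht]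
    simp only [mem_filter] at this
    rw [ht, Function.update_self]
    rw [ht] at this
    cases hy : y i <;> cases hz : z i <;> simp_all
  · have : t ∉ (univ.filter fun t => y t ≠ z t) := by rw [hi]; simp [ht]
    simp only [mem_filter, mem_univ, true_and, not_not] at this
    rw [Function.update_of_ne ht]
    exact this

lemma card_flip_filter (z : Fin n → Bool) (P : (Fin n → Bool) → Prop) [DecidablePred P] :
    (univ.filter fun y => P y ∧ hammingDist y z = 1).card
      = (univ.filter fun i : Fin n => P (Function.update z i (!z i))).card := by
  have him : (univ.filter fun y => P y ∧ hammingDist y z = 1)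
      = (univ.filter fun i : Fin n => P (Function.update z i (!z i))).image
          (fun i => Function.update z i (!z i)) := by
    ext y
    simp only [mem_filter, mem_univ, true_and, mem_image]
    constructor
    · rintro ⟨hP, h1⟩
      obtain ⟨i, rfl⟩ := exists_flip h1
      exact ⟨i, hP, rfl⟩
    · rintro ⟨i, hP, rfl⟩
      exact ⟨hP, flip_dist_one z i⟩
  rw [him, card_image_of_injective _ (flip_injective z)]

lemma split2 (p q : Fin n → Prop) [DecidablePred p] [DecidablePred q] :
    (univ.filter fun i => p i ∧ q i).card + (univ.filter fun i => p i ∧ ¬ q i).card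
      = (univ.filter p).card := by
  rw [← filter_filter, ← filter_filter, card_filter_add_card_filter_not]

/-- The core pointwise counting lemma. -/
lemma pointwise (v x z : Fin n → Bool) (r1 r2 r3 : ℤ) :
    ((univ.filter fun y : Fin n → Bool =>
        ((hammingDist v y : ℤ) = r1 + r3 ∧ (hammingDist x y : ℤ) = r2 + r3 ∧
          (hammingDist v x : ℤ) = r1 + r2) ∧ hammingDist y z = 1).card : ℤ)
    = (r1 + 1) * ind ((hammingDist v z : ℤ) = (r1+1) + r3 ∧
          (hammingDist x z : ℤ) = (r2-1) + r3 ∧ (hammingDist v x : ℤ) = (r1+1) + (r2-1))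
      + (r2 + 1) * ind ((hammingDist v z : ℤ) = (r1-1) + r3 ∧
          (hammingDist x z : ℤ) = (r2+1) + r3 ∧ (hammingDist v x : ℤ) = (r1-1) + (r2+1))
      + (r3 + 1) * ind ((hammingDist v z : ℤ) = r1 + (r3+1) ∧
          (hammingDist x z : ℤ) = r2 + (r3+1) ∧ (hammingDist v x : ℤ) = r1 + r2)
      + ((n : ℤ) - r1 - r2 - r3 + 1) * ind ((hammingDist v z : ℤ) = r1 + (r3-1) ∧
          (hammingDist x z : ℤ) = r2 + (r3-1) ∧ (hammingDist v x : ℤ) = r1 + r2) := by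
  -- the four coordinate-type counts
  set a := (univ.filter fun i : Fin n => ¬ v i = z i ∧ x i = z i).card with ha_def
  set b := (univ.filter fun i : Fin n => v i = z i ∧ ¬ x i = z i).card with hb_def
  set c := (univ.filter fun i : Fin n => ¬ v i = z i ∧ ¬ x i = z i).card with hc_def
  set d := (univ.filter fun i : Fin n => v i = z i ∧ x i = z i).card with hd_def
  -- count identities
  have hac : a + c = hammingDist v z := by
    rw [hd_card]; exact split2 (fun i => ¬ v i = z i) (fun i => x i = z i)
  have hbc : b + c = hammingDist x z := by
    rw [hd_card]
    have h1 : (univ.filter fun i : Fin n => (¬ x i = z i) ∧ v i = z i).card = b := by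
      rw [hb_def]; congr 1; apply filter_congr; intro i _; constructor <;> exact fun h => ⟨h.2, h.1⟩
    have h2 : (univ.filter fun i : Fin n => (¬ x i = z i) ∧ ¬ v i = z i).card = c := by
      rw [hc_def]; congr 1; apply filter_congr; intro i _; constructor <;> exact fun h => ⟨h.2, h.1⟩
    rw [← h1, ← h2]
    exact split2 (fun i => ¬ x i = z i) (fun i => v i = z i)
  have hab : a + b = hammingDist v x := by
    rw [hd_card]
    have h1 : (univ.filter fun i : Fin n => (¬ v i = x i) ∧ v i = z i).card = b := by
      rw [hb_def]; congr 1; apply filter_congr; intro i _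
      cases hv : v i <;> cases hx : x i <;> cases hz : z i <;> simp_all
    have h2 : (univ.filter fun i : Fin n => (¬ v i = x i) ∧ ¬ v i = z i).card = a := by
      rw [ha_def]; congr 1; apply filter_congr; intro i _
      cases hv : v i <;> cases hx : x i <;> cases hz : z i <;> simp_all
    rw [← h1, ← h2]
    rw [Nat.add_comm]
    exact split2 (fun i => ¬ v i = x i) (fun i => v i = z i)
  have habcd : a + b + c + d = n := by
    have h1 : d + b = (univ.filter fun i : Fin n => v i = z i).card :=
      split2 (fun i => v i = z i) (fun i => x i = z i)
    have h2 : a + c = (univ.filter fun i : Fin n => ¬ v i = z i).card := by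
      rw [ha_def, hc_def]
      exact split2 (fun i => ¬ v i = z i) (fun i => x i = z i)
    have h3 : (univ.filter fun i : Fin n => v i = z i).card
        + (univ.filter fun i : Fin n => ¬ v i = z i).card = n := by
      rw [card_filter_add_card_filter_not, card_univ, Fintype.card_fin]
    omega
  -- rewrite the LHS as a count over flipped coordinates
  rw [card_flip_filter z (fun y => (hammingDist v y : ℤ) = r1 + r3 ∧
      (hammingDist x y : ℤ) = r2 + r3 ∧ (hammingDist v x : ℤ) = r1 + r2)]
  rw [card_filter_ind]
  -- expand each summand into the four coordinate types
  have expand : ∀ i : Fin n,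
      ind ((hammingDist v (Function.update z i (!z i)) : ℤ) = r1 + r3 ∧
          (hammingDist x (Function.update z i (!z i)) : ℤ) = r2 + r3 ∧
          (hammingDist v x : ℤ) = r1 + r2)
      = ind (¬ v i = z i ∧ x i = z i) *
          ind ((hammingDist v z : ℤ) - 1 = r1 + r3 ∧ (hammingDist x z : ℤ) + 1 = r2 + r3 ∧
            (hammingDist v x : ℤ) = r1 + r2)
        + ind (v i = z i ∧ ¬ x i = z i) *
          ind ((hammingDist v z : ℤ) + 1 = r1 + r3 ∧ (hammingDist x z : ℤ) - 1 = r2 + r3 ∧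
            (hammingDist v x : ℤ) = r1 + r2)
        + ind (¬ v i = z i ∧ ¬ x i = z i) *
          ind ((hammingDist v z : ℤ) - 1 = r1 + r3 ∧ (hammingDist x z : ℤ) - 1 = r2 + r3 ∧
            (hammingDist v x : ℤ) = r1 + r2)
        + ind (v i = z i ∧ x i = z i) *
          ind ((hammingDist v z : ℤ) + 1 = r1 + r3 ∧ (hammingDist x z : ℤ) + 1 = r2 + r3 ∧
            (hammingDist v x : ℤ) = r1 + r2) := by
    intro i
    rw [dist_update, dist_update]
    by_cases hv : v i = z i
    · by_cases hx : x i = z i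
      · rw [if_pos hv, if_pos hx,
          ind_neg (show ¬(¬ v i = z i ∧ x i = z i) from fun h => h.1 hv),
          ind_neg (show ¬(v i = z i ∧ ¬ x i = z i) from fun h => h.2 hx),
          ind_neg (show ¬(¬ v i = z i ∧ ¬ x i = z i) from fun h => h.1 hv),
          ind_pos (show (v i = z i ∧ x i = z i) from ⟨hv, hx⟩)]
        simp only [zero_mul, one_mul, zero_add, add_zero]
        try exact ind_congr (by constructor <;> (rintro ⟨h1, h2, h3⟩; exact ⟨by omega, by omega, h3⟩))
      · rw [if_pos hv, if_neg hx,
          ind_neg (show ¬(¬ v i = z i ∧ x i = z i) from fun h => h.1 hv),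
          ind_pos (show (v i = z i ∧ ¬ x i = z i) from ⟨hv, hx⟩),
          ind_neg (show ¬(¬ v i = z i ∧ ¬ x i = z i) from fun h => h.1 hv),
          ind_neg (show ¬(v i = z i ∧ x i = z i) from fun h => hx h.2)]
        simp only [zero_mul, one_mul, zero_add, add_zero]
        try exact ind_congr (by constructor <;> (rintro ⟨h1, h2, h3⟩; exact ⟨by omega, by omega, h3⟩))
    · by_cases hx : x i = z i
      · rw [if_neg hv, if_pos hx,
          ind_pos (show (¬ v i = z i ∧ x i = z i) from ⟨hv, hx⟩),
          ind_neg (show ¬(v i = z i ∧ ¬ x i = z i) from fun h => hv h.1),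
          ind_neg (show ¬(¬ v i = z i ∧ ¬ x i = z i) from fun h => h.2 hx),
          ind_neg (show ¬(v i = z i ∧ x i = z i) from fun h => hv h.1)]
        simp only [zero_mul, one_mul, zero_add, add_zero]
        try exact ind_congr (by constructor <;> (rintro ⟨h1, h2, h3⟩; exact ⟨by omega, by omega, h3⟩))
      · rw [if_neg hv, if_neg hx,
          ind_neg (show ¬(¬ v i = z i ∧ x i = z i) from fun h => hx h.2),
          ind_neg (show ¬(v i = z i ∧ ¬ x i = z i) from fun h => hv h.1),
          ind_pos (show (¬ v i = z i ∧ ¬ x i = z i) from ⟨hv, hx⟩),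
          ind_neg (show ¬(v i = z i ∧ x i = z i) from fun h => hv h.1)]
        simp only [zero_mul, one_mul, zero_add, add_zero]
        try exact ind_congr (by constructor <;> (rintro ⟨h1, h2, h3⟩; exact ⟨by omega, by omega, h3⟩))
  rw [Finset.sum_congr rfl fun i _ => expand i]
  rw [Finset.sum_add_distrib, Finset.sum_add_distrib, Finset.sum_add_distrib]
  rw [← Finset.sum_mul, ← Finset.sum_mul, ← Finset.sum_mul, ← Finset.sum_mul]
  rw [← card_filter_ind, ← card_filter_ind, ← card_filter_ind, ← card_filter_ind]
  rw [← ha_def, ← hb_def, ← hc_def, ← hd_def]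
  -- now convert each of the four products
  have e1 : (a : ℤ) * ind ((hammingDist v z : ℤ) - 1 = r1 + r3 ∧
      (hammingDist x z : ℤ) + 1 = r2 + r3 ∧ (hammingDist v x : ℤ) = r1 + r2)
      = (r1 + 1) * ind ((hammingDist v z : ℤ) = (r1+1) + r3 ∧
          (hammingDist x z : ℤ) = (r2-1) + r3 ∧ (hammingDist v x : ℤ) = (r1+1) + (r2-1)) := by
    by_cases h : (hammingDist v z : ℤ) - 1 = r1 + r3 ∧ (hammingDist x z : ℤ) + 1 = r2 + r3 ∧
        (hammingDist v x : ℤ) = r1 + r2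
    · obtain ⟨h1, h2, h3⟩ := h
      rw [ind_pos ⟨h1, h2, h3⟩, ind_pos ⟨by omega, by omega, by omega⟩]
      have hA : (a : ℤ) = r1 + 1 := by
        have t1 := hac; have t2 := hbc; have t3 := hab
        omega
      rw [hA]
    · rw [ind_neg h, ind_neg (show ¬((hammingDist v z : ℤ) = (r1+1) + r3 ∧
          (hammingDist x z : ℤ) = (r2-1) + r3 ∧ (hammingDist v x : ℤ) = (r1+1) + (r2-1)) from
          fun ⟨q1, q2, q3⟩ => h ⟨by omega, by omega, by omega⟩)]
      ring
  have e2 : (b : ℤ) * ind ((hammingDist v z : ℤ) + 1 = r1 + r3 ∧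
      (hammingDist x z : ℤ) - 1 = r2 + r3 ∧ (hammingDist v x : ℤ) = r1 + r2)
      = (r2 + 1) * ind ((hammingDist v z : ℤ) = (r1-1) + r3 ∧
          (hammingDist x z : ℤ) = (r2+1) + r3 ∧ (hammingDist v x : ℤ) = (r1-1) + (r2+1)) := by
    by_cases h : (hammingDist v z : ℤ) + 1 = r1 + r3 ∧ (hammingDist x z : ℤ) - 1 = r2 + r3 ∧
        (hammingDist v x : ℤ) = r1 + r2
    · obtain ⟨h1, h2, h3⟩ := h
      rw [ind_pos ⟨h1, h2, h3⟩, ind_pos ⟨by omega, by omega, by omega⟩]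
      have hB : (b : ℤ) = r2 + 1 := by
        have t1 := hac; have t2 := hbc; have t3 := hab
        omega
      rw [hB]
    · rw [ind_neg h, ind_neg (show ¬((hammingDist v z : ℤ) = (r1-1) + r3 ∧
          (hammingDist x z : ℤ) = (r2+1) + r3 ∧ (hammingDist v x : ℤ) = (r1-1) + (r2+1)) from
          fun ⟨q1, q2, q3⟩ => h ⟨by omega, by omega, by omega⟩)]
      ring
  have e3 : (c : ℤ) * ind ((hammingDist v z : ℤ) - 1 = r1 + r3 ∧
      (hammingDist x z : ℤ) - 1 = r2 + r3 ∧ (hammingDist v x : ℤ) = r1 + r2)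
      = (r3 + 1) * ind ((hammingDist v z : ℤ) = r1 + (r3+1) ∧
          (hammingDist x z : ℤ) = r2 + (r3+1) ∧ (hammingDist v x : ℤ) = r1 + r2) := by
    by_cases h : (hammingDist v z : ℤ) - 1 = r1 + r3 ∧ (hammingDist x z : ℤ) - 1 = r2 + r3 ∧
        (hammingDist v x : ℤ) = r1 + r2
    · obtain ⟨h1, h2, h3⟩ := h
      rw [ind_pos ⟨h1, h2, h3⟩, ind_pos ⟨by omega, by omega, h3⟩]
      have hC : (c : ℤ) = r3 + 1 := by
        have t1 := hac; have t2 := hbc; have t3 := hab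
        omega
      rw [hC]
    · rw [ind_neg h, ind_neg (show ¬((hammingDist v z : ℤ) = r1 + (r3+1) ∧
          (hammingDist x z : ℤ) = r2 + (r3+1) ∧ (hammingDist v x : ℤ) = r1 + r2) from
          fun ⟨q1, q2, q3⟩ => h ⟨by omega, by omega, q3⟩)]
      ring
  have e4 : (d : ℤ) * ind ((hammingDist v z : ℤ) + 1 = r1 + r3 ∧
      (hammingDist x z : ℤ) + 1 = r2 + r3 ∧ (hammingDist v x : ℤ) = r1 + r2)
      = ((n : ℤ) - r1 - r2 - r3 + 1) * ind ((hammingDist v z : ℤ) = r1 + (r3-1) ∧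
          (hammingDist x z : ℤ) = r2 + (r3-1) ∧ (hammingDist v x : ℤ) = r1 + r2) := by
    by_cases h : (hammingDist v z : ℤ) + 1 = r1 + r3 ∧ (hammingDist x z : ℤ) + 1 = r2 + r3 ∧
        (hammingDist v x : ℤ) = r1 + r2
    · obtain ⟨h1, h2, h3⟩ := h
      rw [ind_pos ⟨h1, h2, h3⟩, ind_pos ⟨by omega, by omega, h3⟩]
      have hD : (d : ℤ) = (n : ℤ) - r1 - r2 - r3 + 1 := by
        have t1 := hac; have t2 := hbc; have t3 := hab; have t4 := habcd
        omega
      rw [hD]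
    · rw [ind_neg h, ind_neg (show ¬((hammingDist v z : ℤ) = r1 + (r3-1) ∧
          (hammingDist x z : ℤ) = r2 + (r3-1) ∧ (hammingDist v x : ℤ) = r1 + r2) from
          fun ⟨q1, q2, q3⟩ => h ⟨by omega, by omega, q3⟩)]
      ring
  rw [e1, e2, e3, e4]

lemma hW {m : ℕ} (C : Fin m → Finset (Fin n → Bool)) (v : Fin n → Bool) (j : Fin m)
    (a b c : ℤ) (t : Fin m) :
    Wdist C v j a b c t
      = ∑ x : Fin n → Bool, ∑ z : Fin n → Bool, ind (x ∈ C j) * ind (z ∈ C t) *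
          ind ((hammingDist v z : ℤ) = a + c ∧ (hammingDist x z : ℤ) = b + c ∧
            (hammingDist v x : ℤ) = a + b) := by
  rw [Wdist, card_filter_ind, Finset.sum_product]
  refine Finset.sum_congr rfl fun x _ => Finset.sum_congr rfl fun z _ => ?_
  rw [ind_and, ind_and, ← mul_assoc]

end WdistAux

open Finset WdistAux

/-- the recursion `W_{v,j}^{r_1,r_2,r_3} · S
= (r_1+1) W^{r_1+1,r_2-1,r_3} + (r_2+1) W^{r_1-1,r_2+1,r_3}
+ (r_3+1) W^{r_1,r_2,r_3+1} + (n-r_1-r_2-r_3+1) W^{r_1,r_2,r_3-1}`,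
for an equitable partition `C` of the `n`-cube with quotient matrix `S`. -/
theorem Wdist_recursion {n m : ℕ} (C : Fin m → Finset (Fin n → Bool))
    (S : Matrix (Fin m) (Fin m) ℤ)
    (hpart : ∀ v : Fin n → Bool, ∃! i : Fin m, v ∈ C i)
    (hequit : ∀ i : Fin m, ∀ v ∈ C i, ∀ j : Fin m,
      (((C j).filter fun u => hammingDist v u = 1).card : ℤ) = S i j)
    (v : Fin n → Bool) (j : Fin m) (r1 r2 r3 : ℤ) :
    ∀ k : Fin m,
      (∑ t : Fin m, Wdist C v j r1 r2 r3 t * S t k) =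
        (r1 + 1) * Wdist C v j (r1 + 1) (r2 - 1) r3 k
        + (r2 + 1) * Wdist C v j (r1 - 1) (r2 + 1) r3 k
        + (r3 + 1) * Wdist C v j r1 r2 (r3 + 1) k
        + (n - r1 - r2 - r3 + 1) * Wdist C v j r1 r2 (r3 - 1) k := by
  intro k
  have key : ∀ y : Fin n → Bool, (∑ t : Fin m, ind (y ∈ C t) * S t k)
      = ∑ z : Fin n → Bool, ind (z ∈ C k) * ind (hammingDist y z = 1) := by
    intro y
    obtain ⟨t₀, ht₀, hu⟩ := hpart y
    rw [Finset.sum_eq_single t₀]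
    · rw [ind_pos ht₀, one_mul, ← hequit t₀ y ht₀ k]
      have hflt : ((C k).filter fun u => hammingDist y u = 1)
          = univ.filter fun z => z ∈ C k ∧ hammingDist y z = 1 := by
        ext u; simp [Finset.mem_filter]
      rw [hflt, card_filter_ind]
      exact Finset.sum_congr rfl fun z _ => ind_and _ _
    · intro t _ hne
      rw [ind_neg (fun h => hne (hu t h)), zero_mul]
    · intro h; exact absurd (Finset.mem_univ t₀) h
  have L1 : (∑ t : Fin m, Wdist C v j r1 r2 r3 t * S t k)
      = ∑ x : Fin n → Bool, ∑ y : Fin n → Bool,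
          ind (x ∈ C j) * ind ((hammingDist v y : ℤ) = r1 + r3 ∧
            (hammingDist x y : ℤ) = r2 + r3 ∧ (hammingDist v x : ℤ) = r1 + r2)
          * (∑ t : Fin m, ind (y ∈ C t) * S t k) := by
    have h1 : ∀ t : Fin m, Wdist C v j r1 r2 r3 t * S t k
        = ∑ x : Fin n → Bool, ∑ y : Fin n → Bool,
            ind (x ∈ C j) * ind ((hammingDist v y : ℤ) = r1 + r3 ∧
              (hammingDist x y : ℤ) = r2 + r3 ∧ (hammingDist v x : ℤ) = r1 + r2)
            * (ind (y ∈ C t) * S t k) := by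
      intro t
      rw [hW C v j r1 r2 r3 t, Finset.sum_mul]
      refine Finset.sum_congr rfl fun x _ => ?_
      rw [Finset.sum_mul]
      exact Finset.sum_congr rfl fun y _ => by ring
    rw [Finset.sum_congr rfl fun t _ => h1 t, Finset.sum_comm]
    refine Finset.sum_congr rfl fun x _ => ?_
    rw [Finset.sum_comm]
    refine Finset.sum_congr rfl fun y _ => ?_
    rw [← Finset.mul_sum]
  rw [L1]
  have L2 : ∀ x y : Fin n → Bool,
      ind (x ∈ C j) * ind ((hammingDist v y : ℤ) = r1 + r3 ∧
        (hammingDist x y : ℤ) = r2 + r3 ∧ (hammingDist v x : ℤ) = r1 + r2)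
      * (∑ t : Fin m, ind (y ∈ C t) * S t k)
      = ∑ z : Fin n → Bool, ind (x ∈ C j) * ind (z ∈ C k) *
          (ind (((hammingDist v y : ℤ) = r1 + r3 ∧
            (hammingDist x y : ℤ) = r2 + r3 ∧ (hammingDist v x : ℤ) = r1 + r2)
            ∧ hammingDist y z = 1)) := by
    intro x y
    rw [key y, Finset.mul_sum]
    refine Finset.sum_congr rfl fun z _ => ?_
    rw [ind_and ((hammingDist v y : ℤ) = r1 + r3 ∧
      (hammingDist x y : ℤ) = r2 + r3 ∧ (hammingDist v x : ℤ) = r1 + r2)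
      (hammingDist y z = 1)]
    ring
  rw [Finset.sum_congr rfl fun x _ => Finset.sum_congr rfl fun y _ => L2 x y]
  have L3 : ∀ x : Fin n → Bool,
      (∑ y : Fin n → Bool, ∑ z : Fin n → Bool, ind (x ∈ C j) * ind (z ∈ C k) *
          (ind (((hammingDist v y : ℤ) = r1 + r3 ∧
            (hammingDist x y : ℤ) = r2 + r3 ∧ (hammingDist v x : ℤ) = r1 + r2)
            ∧ hammingDist y z = 1)))
      = ∑ z : Fin n → Bool, ind (x ∈ C j) * ind (z ∈ C k) *
          ((univ.filter fun y : Fin n → Bool =>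
            ((hammingDist v y : ℤ) = r1 + r3 ∧ (hammingDist x y : ℤ) = r2 + r3 ∧
              (hammingDist v x : ℤ) = r1 + r2) ∧ hammingDist y z = 1).card : ℤ) := by
    intro x
    rw [Finset.sum_comm]
    refine Finset.sum_congr rfl fun z _ => ?_
    rw [card_filter_ind, Finset.mul_sum]
  rw [Finset.sum_congr rfl fun x _ => L3 x]
  rw [Finset.sum_congr rfl fun x _ => Finset.sum_congr rfl fun z _ =>
    congrArg (ind (x ∈ C j) * ind (z ∈ C k) * ·) (pointwise v x z r1 r2 r3)]
  rw [hW C v j (r1+1) (r2-1) r3 k, hW C v j (r1-1) (r2+1) r3 k,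
    hW C v j r1 r2 (r3+1) k, hW C v j r1 r2 (r3-1) k]
  rw [Finset.mul_sum, Finset.mul_sum, Finset.mul_sum, Finset.mul_sum,
    ← Finset.sum_add_distrib, ← Finset.sum_add_distrib, ← Finset.sum_add_distrib]
  refine Finset.sum_congr rfl fun x _ => ?_
  rw [Finset.mul_sum, Finset.mul_sum, Finset.mul_sum, Finset.mul_sum,
    ← Finset.sum_add_distrib, ← Finset.sum_add_distrib, ← Finset.sum_add_distrib]
  refine Finset.sum_congr rfl fun z _ => ?_
  ring
end

section
/- Let C be an equitable partition of the n-cube with quotient matrix S, and define the triangle distribution T^{r_1,r_2,r_3} as the vector of length m³ whose (i,j,k)-entry counts triples (v,x,y) with v ∈ C_i, x ∈ C_j, y ∈ C_k, d(x,y) = r_2+r_3, d(v,y) = r_1+r_3, d(v,x) = r_1+r_2. Then T^{r_1,r_2,r_3} S''' = (r_1+1) T^{r_1+1,r_2-1,r_3} + (r_2+1) T^{r_1-1,r_2+1,r_3} + (n - r_1 - r_2 - r_3 + 1) T^{r_1,r_2,r_3-1} + (r_3+1) T^{r_1,r_2,r_3+1}, where S''' = I⊗I⊗S acts on the third index and terms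 with negative indices vanish. -/
/-- `T^{r_1,r_2,r_3}_{ijk}`: the number of triples `(v,x,y)` with `v ∈ C i`,
`x ∈ C j`, `y ∈ C k`, `d(x,y) = r_2+r_3`, `d(v,y) = r_1+r_3`, `d(v,x) = r_1+r_2`
(indices in `ℤ`; for a negative index the count is automatically zero). -/
def Tdist {n m : ℕ} (C : Fin m → Finset (Fin n → Bool)) (r1 r2 r3 : ℤ)
    (i j k : Fin m) : ℤ :=
  ((Finset.univ ×ˢ Finset.univ ×ˢ Finset.univ).filter
    fun t : (Fin n → Bool) × (Fin n → Bool) × (Fin n → Bool) =>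
      t.1 ∈ C i ∧ t.2.1 ∈ C j ∧ t.2.2 ∈ C k ∧
        (hammingDist t.2.1 t.2.2 : ℤ) = r2 + r3 ∧
        (hammingDist t.1 t.2.2 : ℤ) = r1 + r3 ∧
        (hammingDist t.1 t.2.1 : ℤ) = r1 + r2).card

open Finset

namespace TdistAux



variable {n : ℕ}

def flip (z : Fin n → Bool) (p : Fin n) : Fin n → Bool :=
  Function.update z p (!z p)

lemma flip_self (z : Fin n → Bool) (p : Fin n) : flip z p p = !z p := by
  simp [flip]

lemma flip_ne (z : Fin n → Bool) {p q : Fin n} (h : q ≠ p) : flip z p q = z q := by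
  simp [flip, Function.update_of_ne h]

lemma hd_def (v w : Fin n → Bool) :
    hammingDist v w = (univ.filter fun q => v q ≠ w q).card := rfl

lemma dist_flip (v z : Fin n → Bool) (p : Fin n) :
    (hammingDist v (flip z p) : ℤ) =
      (hammingDist v z : ℤ) + (if v p = z p then 1 else -1) := by
  by_cases h : v p = z p
  · have hset : (univ.filter fun q => v q ≠ flip z p q)
        = insert p (univ.filter fun q => v q ≠ z q) := by
      ext q
      by_cases hq : q = p
      · subst hq
        simp only [mem_filter, mem_univ, true_and, mem_insert, flip_self]
        revert h; cases v q <;> cases z q <;> simp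
      · simp [hq, flip_ne _ hq]
    have hp : p ∉ (univ.filter fun q => v q ≠ z q) := by simp [h]
    rw [hd_def, hd_def, hset, card_insert_of_notMem hp, if_pos h]
    push_cast; ring
  · have hset : (univ.filter fun q => v q ≠ flip z p q)
        = (univ.filter fun q => v q ≠ z q).erase p := by
      ext q
      by_cases hq : q = p
      · subst hq
        simp only [mem_filter, mem_univ, true_and, mem_erase, flip_self]
        revert h; cases v q <;> cases z q <;> simp
      · simp [hq, flip_ne _ hq]
    have hp : p ∈ (univ.filter fun q => v q ≠ z q) := by simp [h]
    have h1 : 1 ≤ (univ.filter fun q => v q ≠ z q).card := card_pos.mpr ⟨p, hp⟩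
    rw [hd_def, hd_def, hset, card_erase_of_mem hp, if_neg h]
    omega

lemma card_nbhd (z : Fin n → Bool) (P : (Fin n → Bool) → Prop) [DecidablePred P] :
    (univ.filter fun y => hammingDist z y = 1 ∧ P y).card
      = (univ.filter fun p : Fin n => P (flip z p)).card := by
  symm
  apply Finset.card_bij (fun p _ => flip z p)
  · intro p hp
    simp only [mem_filter, mem_univ, true_and] at hp ⊢
    refine ⟨?_, hp⟩
    have := dist_flip z z p
    simp at this
    omega
  · intro p hp p' hp' h
    by_contra hne
    have h1 : flip z p p = flip z p' p := by rw [h]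
    rw [flip_self, flip_ne z (Ne.symm (fun hh => hne hh.symm))] at h1
    · revert h1; cases z p <;> simp
  · intro y hy
    simp only [mem_filter, mem_univ, true_and] at hy
    obtain ⟨hd, hP⟩ := hy
    rw [hd_def] at hd
    obtain ⟨p0, hp⟩ := card_eq_one.mp hd
    set p := p0 with hp0
    have hyp : ∀ q, (z q ≠ y q) ↔ q = p := by
      intro q
      constructor
      · intro hq
        have : q ∈ (univ.filter fun q => z q ≠ y q) := by simp [hq]
        rw [hp] at this; simpa using this
      · intro hq; subst hq
        have : p ∈ (univ.filter fun q => z q ≠ y q) := by rw [hp]; simp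
        simpa using this
    have hyeq : y = flip z p := by
      funext q
      by_cases hq : q = p
      · subst hq
        rw [flip_self]
        have := (hyp q).mpr rfl
        revert this; cases z q <;> cases y q <;> simp
      · rw [flip_ne _ hq]
        have := fun hh => hq ((hyp q).mp hh)
        revert this; cases z q <;> cases y q <;> simp
    refine ⟨p, ?_, hyeq.symm⟩
    simp only [mem_filter, mem_univ, true_and]
    rw [← hyeq]; exact hP


lemma pointwise (r1 r2 r3 : ℤ) (v x z : Fin n → Bool)
    (hvx : (hammingDist v x : ℤ) = r1 + r2) :
    ((univ.filter fun y => hammingDist z y = 1 ∧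
        (hammingDist x y : ℤ) = r2 + r3 ∧ (hammingDist v y : ℤ) = r1 + r3).card : ℤ)
      = (r1+1) * (if (hammingDist x z : ℤ) = (r2-1)+r3 ∧ (hammingDist v z : ℤ) = (r1+1)+r3 then 1 else 0)
      + (r2+1) * (if (hammingDist x z : ℤ) = (r2+1)+r3 ∧ (hammingDist v z : ℤ) = (r1-1)+r3 then 1 else 0)
      + ((n:ℤ)-r1-r2-r3+1) * (if (hammingDist x z : ℤ) = r2+(r3-1) ∧ (hammingDist v z : ℤ) = r1+(r3-1) then 1 else 0)
      + (r3+1) * (if (hammingDist x z : ℤ) = r2+(r3+1) ∧ (hammingDist v z : ℤ) = r1+(r3+1) then 1 else 0) := by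
  classical
  -- class cardinalities
  set cA := (univ.filter fun p : Fin n => v p ≠ z p ∧ x p ≠ z p).card with hcA
  set cB := (univ.filter fun p : Fin n => v p ≠ z p ∧ x p = z p).card with hcB
  set cC := (univ.filter fun p : Fin n => v p = z p ∧ x p ≠ z p).card with hcC
  set cD := (univ.filter fun p : Fin n => v p = z p ∧ x p = z p).card with hcD
  have f1 : cA + cB = hammingDist v z := by
    rw [hcA, hcB, hd_def, card_filter, card_filter, card_filter, ← Finset.sum_add_distrib]
    refine Finset.sum_congr rfl fun q _ => ?_
    by_cases h1 : v q = z q <;> by_cases h2 : x q = z q <;> simp [h1, h2]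
  have f2 : cA + cC = hammingDist x z := by
    rw [hcA, hcC, hd_def, card_filter, card_filter, card_filter, ← Finset.sum_add_distrib]
    refine Finset.sum_congr rfl fun q _ => ?_
    by_cases h1 : v q = z q <;> by_cases h2 : x q = z q <;> simp [h1, h2]
  have f4 : cB + cC = hammingDist v x := by
    rw [hcB, hcC, hd_def, card_filter, card_filter, card_filter, ← Finset.sum_add_distrib]
    refine Finset.sum_congr rfl fun q _ => ?_
    cases hv : v q <;> cases hx : x q <;> cases hz : z q <;> simp [hv, hx, hz]
  have f3 : cA + cB + cC + cD = n := by
    rw [hcA, hcB, hcC, hcD, card_filter, card_filter, card_filter, card_filter,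
      ← Finset.sum_add_distrib, ← Finset.sum_add_distrib, ← Finset.sum_add_distrib]
    refine Eq.trans (Finset.sum_congr rfl fun q _ => ?_) (by simp : (∑ _q : Fin n, (1:ℕ)) = n)
    by_cases h1 : v q = z q <;> by_cases h2 : x q = z q <;> simp [h1, h2]
  -- enumerate neighbors by flip position
  rw [card_nbhd z (fun y => (hammingDist x y : ℤ) = r2 + r3 ∧ (hammingDist v y : ℤ) = r1 + r3)]
  rw [card_filter]
  push_cast
  have hpt : ∀ p : Fin n,
      (if (hammingDist x (flip z p) : ℤ) = r2 + r3 ∧ (hammingDist v (flip z p) : ℤ) = r1 + r3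
        then (1:ℤ) else 0)
      = (if (hammingDist x z : ℤ) = (r2-1)+r3 ∧ (hammingDist v z : ℤ) = (r1+1)+r3 then 1 else 0)
          * (if v p ≠ z p ∧ x p = z p then 1 else 0)
        + (if (hammingDist x z : ℤ) = (r2+1)+r3 ∧ (hammingDist v z : ℤ) = (r1-1)+r3 then 1 else 0)
          * (if v p = z p ∧ x p ≠ z p then 1 else 0)
        + (if (hammingDist x z : ℤ) = r2+(r3-1) ∧ (hammingDist v z : ℤ) = r1+(r3-1) then 1 else 0)
          * (if v p = z p ∧ x p = z p then 1 else 0)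
        + (if (hammingDist x z : ℤ) = r2+(r3+1) ∧ (hammingDist v z : ℤ) = r1+(r3+1) then 1 else 0)
          * (if v p ≠ z p ∧ x p ≠ z p then 1 else 0) := by
    intro p
    rw [dist_flip x z p, dist_flip v z p]
    by_cases h1 : v p = z p <;> by_cases h2 : x p = z p <;>
      simp only [h1, h2, if_pos, if_neg, not_true, not_false_iff, and_true, true_and,
        and_false, false_and, if_true, if_false, mul_one, mul_zero, add_zero, zero_add, ne_eq] <;>
      split_ifs <;> omega
  rw [Finset.sum_congr rfl (fun p _ => hpt p)]
  simp only [Finset.sum_add_distrib, ← Finset.mul_sum]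
  have gB : (∑ p : Fin n, (if v p ≠ z p ∧ x p = z p then (1:ℤ) else 0)) = (cB : ℤ) := by
    rw [hcB, card_filter]; push_cast; rfl
  have gC : (∑ p : Fin n, (if v p = z p ∧ x p ≠ z p then (1:ℤ) else 0)) = (cC : ℤ) := by
    rw [hcC, card_filter]; push_cast; rfl
  have gD : (∑ p : Fin n, (if v p = z p ∧ x p = z p then (1:ℤ) else 0)) = (cD : ℤ) := by
    rw [hcD, card_filter]; push_cast; rfl
  have gA : (∑ p : Fin n, (if v p ≠ z p ∧ x p ≠ z p then (1:ℤ) else 0)) = (cA : ℤ) := by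
    rw [hcA, card_filter]; push_cast; rfl
  rw [gA, gB, gC, gD]
  have e1 : (if (hammingDist x z : ℤ) = (r2-1)+r3 ∧ (hammingDist v z : ℤ) = (r1+1)+r3 then (1:ℤ) else 0) * (cB : ℤ)
      = (r1+1) * (if (hammingDist x z : ℤ) = (r2-1)+r3 ∧ (hammingDist v z : ℤ) = (r1+1)+r3 then 1 else 0) := by
    split_ifs with h
    · simp only [mul_one, one_mul]; omega
    · ring
  have e2 : (if (hammingDist x z : ℤ) = (r2+1)+r3 ∧ (hammingDist v z : ℤ) = (r1-1)+r3 then (1:ℤ) else 0) * (cC : ℤ)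
      = (r2+1) * (if (hammingDist x z : ℤ) = (r2+1)+r3 ∧ (hammingDist v z : ℤ) = (r1-1)+r3 then 1 else 0) := by
    split_ifs with h
    · simp only [mul_one, one_mul]; omega
    · ring
  have e3 : (if (hammingDist x z : ℤ) = r2+(r3-1) ∧ (hammingDist v z : ℤ) = r1+(r3-1) then (1:ℤ) else 0) * (cD : ℤ)
      = ((n:ℤ)-r1-r2-r3+1) * (if (hammingDist x z : ℤ) = r2+(r3-1) ∧ (hammingDist v z : ℤ) = r1+(r3-1) then 1 else 0) := by
    split_ifs with h
    · simp only [mul_one, one_mul]; omega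
    · ring
  have e4 : (if (hammingDist x z : ℤ) = r2+(r3+1) ∧ (hammingDist v z : ℤ) = r1+(r3+1) then (1:ℤ) else 0) * (cA : ℤ)
      = (r3+1) * (if (hammingDist x z : ℤ) = r2+(r3+1) ∧ (hammingDist v z : ℤ) = r1+(r3+1) then 1 else 0) := by
    split_ifs with h
    · simp only [mul_one, one_mul]; omega
    · ring
  rw [e1, e2, e3, e4]


lemma tdist_eq {m : ℕ} (C : Fin m → Finset (Fin n → Bool)) (a b c : ℤ) (i j k : Fin m) :
    Tdist C a b c i j k = ∑ v : Fin n → Bool, ∑ x : Fin n → Bool, ∑ y : Fin n → Bool,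
      if v ∈ C i ∧ x ∈ C j ∧ y ∈ C k ∧ (hammingDist x y : ℤ) = b + c ∧
         (hammingDist v y : ℤ) = a + c ∧ (hammingDist v x : ℤ) = a + b then (1:ℤ) else 0 := by
  rw [Tdist, card_filter]
  push_cast
  rw [Finset.sum_product]
  refine Finset.sum_congr rfl fun v _ => ?_
  rw [Finset.sum_product]

end TdistAux

open TdistAux

/-- the triangle distribution of an equitable partition of the `n`-cube
satisfies `T^{r_1,r_2,r_3} S''' = (r_1+1) T^{r_1+1,r_2-1,r_3}
+ (r_2+1) T^{r_1-1,r_2+1,r_3} + (n-r_1-r_2-r_3+1) T^{r_1,r_2,r_3-1}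
+ (r_3+1) T^{r_1,r_2,r_3+1}`, where `S'''` acts on the third index. -/
theorem Tdist_recursion {n m : ℕ} (C : Fin m → Finset (Fin n → Bool))
    (S : Matrix (Fin m) (Fin m) ℤ)
    (hpart : ∀ v : Fin n → Bool, ∃! i : Fin m, v ∈ C i)
    (hequit : ∀ i : Fin m, ∀ v ∈ C i, ∀ j : Fin m,
      (((C j).filter fun u => hammingDist v u = 1).card : ℤ) = S i j)
    (r1 r2 r3 : ℤ) :
    ∀ i j k : Fin m,
      (∑ t : Fin m, Tdist C r1 r2 r3 i j t * S t k) =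
        (r1 + 1) * Tdist C (r1 + 1) (r2 - 1) r3 i j k
        + (r2 + 1) * Tdist C (r1 - 1) (r2 + 1) r3 i j k
        + (n - r1 - r2 - r3 + 1) * Tdist C r1 r2 (r3 - 1) i j k
        + (r3 + 1) * Tdist C r1 r2 (r3 + 1) i j k := by
  intro i j k
  classical
  have step1 : (∑ t : Fin m, Tdist C r1 r2 r3 i j t * S t k)
      = ∑ v : Fin n → Bool, ∑ x : Fin n → Bool, ∑ y : Fin n → Bool,
          (if v ∈ C i ∧ x ∈ C j ∧ (hammingDist x y : ℤ) = r2 + r3 ∧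
              (hammingDist v y : ℤ) = r1 + r3 ∧ (hammingDist v x : ℤ) = r1 + r2
            then (((C k).filter fun u => hammingDist y u = 1).card : ℤ) else 0) := by
    simp only [tdist_eq, Finset.sum_mul, ite_mul, one_mul, zero_mul]
    rw [Finset.sum_comm]
    refine Finset.sum_congr rfl fun v _ => ?_
    rw [Finset.sum_comm]
    refine Finset.sum_congr rfl fun x _ => ?_
    rw [Finset.sum_comm]
    refine Finset.sum_congr rfl fun y _ => ?_
    by_cases h : v ∈ C i ∧ x ∈ C j ∧ (hammingDist x y : ℤ) = r2 + r3 ∧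
        (hammingDist v y : ℤ) = r1 + r3 ∧ (hammingDist v x : ℤ) = r1 + r2
    · obtain ⟨h1, h2, h3, h4, h5⟩ := h
      obtain ⟨t0, ht0, huniq⟩ := hpart y
      rw [if_pos ⟨h1, h2, h3, h4, h5⟩]
      rw [Finset.sum_eq_single t0]
      · rw [if_pos ⟨h1, h2, ht0, h3, h4, h5⟩]
        exact (hequit t0 y ht0 k).symm
      · intro b _ hb
        rw [if_neg]
        intro hc
        exact hb (huniq b hc.2.2.1)
      · intro hh; exact absurd (Finset.mem_univ t0) hh
    · rw [if_neg h]
      refine Finset.sum_eq_zero fun t _ => ?_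
      rw [if_neg]
      intro hc
      exact h ⟨hc.1, hc.2.1, hc.2.2.2⟩
  have hN : ∀ y : Fin n → Bool, (((C k).filter fun u => hammingDist y u = 1).card : ℤ)
      = ∑ z : Fin n → Bool, if z ∈ C k ∧ hammingDist y z = 1 then (1:ℤ) else 0 := by
    intro y
    have : (C k).filter (fun u => hammingDist y u = 1)
        = univ.filter fun z => z ∈ C k ∧ hammingDist y z = 1 := by
      ext z; simp
    rw [this, card_filter]
    push_cast
    rfl
  have step2 : ∀ v x : Fin n → Bool,
      (∑ y : Fin n → Bool,
        (if v ∈ C i ∧ x ∈ C j ∧ (hammingDist x y : ℤ) = r2 + r3 ∧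
            (hammingDist v y : ℤ) = r1 + r3 ∧ (hammingDist v x : ℤ) = r1 + r2
          then (((C k).filter fun u => hammingDist y u = 1).card : ℤ) else 0))
      = ∑ z : Fin n → Bool,
          (if v ∈ C i ∧ x ∈ C j ∧ z ∈ C k ∧ (hammingDist v x : ℤ) = r1 + r2
            then ((univ.filter fun y => hammingDist z y = 1 ∧
                (hammingDist x y : ℤ) = r2 + r3 ∧ (hammingDist v y : ℤ) = r1 + r3).card : ℤ)
            else 0) := by
    intro v x
    have lhs_eq : (∑ y : Fin n → Bool,
        (if v ∈ C i ∧ x ∈ C j ∧ (hammingDist x y : ℤ) = r2 + r3 ∧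
            (hammingDist v y : ℤ) = r1 + r3 ∧ (hammingDist v x : ℤ) = r1 + r2
          then (((C k).filter fun u => hammingDist y u = 1).card : ℤ) else 0))
        = ∑ y : Fin n → Bool, ∑ z : Fin n → Bool,
            (if v ∈ C i ∧ x ∈ C j ∧ z ∈ C k ∧ (hammingDist v x : ℤ) = r1 + r2 ∧
                hammingDist z y = 1 ∧ (hammingDist x y : ℤ) = r2 + r3 ∧
                (hammingDist v y : ℤ) = r1 + r3 then (1:ℤ) else 0) := by
      refine Finset.sum_congr rfl fun y _ => ?_
      by_cases h : v ∈ C i ∧ x ∈ C j ∧ (hammingDist x y : ℤ) = r2 + r3 ∧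
          (hammingDist v y : ℤ) = r1 + r3 ∧ (hammingDist v x : ℤ) = r1 + r2
      · obtain ⟨h1, h2, h3, h4, h5⟩ := h
        rw [if_pos ⟨h1, h2, h3, h4, h5⟩, hN y]
        refine Finset.sum_congr rfl fun z _ => ?_
        refine if_congr ?_ rfl rfl
        constructor
        · rintro ⟨hz, hdz⟩
          exact ⟨h1, h2, hz, h5, by rw [hammingDist_comm]; exact hdz, h3, h4⟩
        · rintro ⟨_, _, hz, _, hdz, _, _⟩
          exact ⟨hz, by rw [hammingDist_comm]; exact hdz⟩
      · rw [if_neg h]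
        refine (Finset.sum_eq_zero fun z _ => ?_).symm
        rw [if_neg]
        intro hc
        exact h ⟨hc.1, hc.2.1, hc.2.2.2.2.2.1, hc.2.2.2.2.2.2, hc.2.2.2.1⟩
    rw [lhs_eq, Finset.sum_comm]
    refine Finset.sum_congr rfl fun z _ => ?_
    by_cases h : v ∈ C i ∧ x ∈ C j ∧ z ∈ C k ∧ (hammingDist v x : ℤ) = r1 + r2
    · obtain ⟨h1, h2, h3, h4⟩ := h
      rw [if_pos ⟨h1, h2, h3, h4⟩, card_filter]
      push_cast
      refine Finset.sum_congr rfl fun y _ => ?_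
      refine if_congr ?_ rfl rfl
      constructor
      · rintro ⟨_, _, _, _, a, b, c⟩; exact ⟨a, b, c⟩
      · rintro ⟨a, b, c⟩; exact ⟨h1, h2, h3, h4, a, b, c⟩
    · rw [if_neg h]
      refine Finset.sum_eq_zero fun y _ => ?_
      rw [if_neg]
      intro hc
      exact h ⟨hc.1, hc.2.1, hc.2.2.1, hc.2.2.2.1⟩
  rw [step1]
  rw [Finset.sum_congr rfl fun v _ => Finset.sum_congr rfl fun x _ => step2 v x]
  simp only [tdist_eq, Finset.mul_sum]
  rw [← Finset.sum_add_distrib, ← Finset.sum_add_distrib, ← Finset.sum_add_distrib]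
  refine Finset.sum_congr rfl fun v _ => ?_
  rw [← Finset.sum_add_distrib, ← Finset.sum_add_distrib, ← Finset.sum_add_distrib]
  refine Finset.sum_congr rfl fun x _ => ?_
  rw [← Finset.sum_add_distrib, ← Finset.sum_add_distrib, ← Finset.sum_add_distrib]
  refine Finset.sum_congr rfl fun z _ => ?_
  by_cases hm : v ∈ C i ∧ x ∈ C j ∧ z ∈ C k
  · obtain ⟨h1, h2, h3⟩ := hm
    by_cases hd : (hammingDist v x : ℤ) = r1 + r2
    · rw [if_pos ⟨h1, h2, h3, hd⟩]
      have t1 : (if v ∈ C i ∧ x ∈ C j ∧ z ∈ C k ∧ (hammingDist x z : ℤ) = r2 - 1 + r3 ∧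
            (hammingDist v z : ℤ) = r1 + 1 + r3 ∧ (hammingDist v x : ℤ) = r1 + 1 + (r2 - 1)
          then (1:ℤ) else 0)
          = (if (hammingDist x z : ℤ) = (r2-1)+r3 ∧ (hammingDist v z : ℤ) = (r1+1)+r3 then (1:ℤ) else 0) := by
        refine if_congr ⟨fun h => ⟨h.2.2.2.1, h.2.2.2.2.1⟩,
          fun h => ⟨h1, h2, h3, h.1, h.2, by omega⟩⟩ rfl rfl
      have t2 : (if v ∈ C i ∧ x ∈ C j ∧ z ∈ C k ∧ (hammingDist x z : ℤ) = r2 + 1 + r3 ∧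
            (hammingDist v z : ℤ) = r1 - 1 + r3 ∧ (hammingDist v x : ℤ) = r1 - 1 + (r2 + 1)
          then (1:ℤ) else 0)
          = (if (hammingDist x z : ℤ) = (r2+1)+r3 ∧ (hammingDist v z : ℤ) = (r1-1)+r3 then (1:ℤ) else 0) := by
        refine if_congr ⟨fun h => ⟨h.2.2.2.1, h.2.2.2.2.1⟩,
          fun h => ⟨h1, h2, h3, h.1, h.2, by omega⟩⟩ rfl rfl
      have t3 : (if v ∈ C i ∧ x ∈ C j ∧ z ∈ C k ∧ (hammingDist x z : ℤ) = r2 + (r3 - 1) ∧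
            (hammingDist v z : ℤ) = r1 + (r3 - 1) ∧ (hammingDist v x : ℤ) = r1 + r2
          then (1:ℤ) else 0)
          = (if (hammingDist x z : ℤ) = r2+(r3-1) ∧ (hammingDist v z : ℤ) = r1+(r3-1) then (1:ℤ) else 0) := by
        refine if_congr ⟨fun h => ⟨h.2.2.2.1, h.2.2.2.2.1⟩,
          fun h => ⟨h1, h2, h3, h.1, h.2, hd⟩⟩ rfl rfl
      have t4 : (if v ∈ C i ∧ x ∈ C j ∧ z ∈ C k ∧ (hammingDist x z : ℤ) = r2 + (r3 + 1) ∧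
            (hammingDist v z : ℤ) = r1 + (r3 + 1) ∧ (hammingDist v x : ℤ) = r1 + r2
          then (1:ℤ) else 0)
          = (if (hammingDist x z : ℤ) = r2+(r3+1) ∧ (hammingDist v z : ℤ) = r1+(r3+1) then (1:ℤ) else 0) := by
        refine if_congr ⟨fun h => ⟨h.2.2.2.1, h.2.2.2.2.1⟩,
          fun h => ⟨h1, h2, h3, h.1, h.2, hd⟩⟩ rfl rfl
      rw [t1, t2, t3, t4]
      exact pointwise r1 r2 r3 v x z hd
    · have n1 : ¬ (v ∈ C i ∧ x ∈ C j ∧ z ∈ C k ∧ (hammingDist x z : ℤ) = r2 - 1 + r3 ∧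
          (hammingDist v z : ℤ) = r1 + 1 + r3 ∧ (hammingDist v x : ℤ) = r1 + 1 + (r2 - 1)) := by
        intro hc; exact hd (by have := hc.2.2.2.2.2; omega)
      have n2 : ¬ (v ∈ C i ∧ x ∈ C j ∧ z ∈ C k ∧ (hammingDist x z : ℤ) = r2 + 1 + r3 ∧
          (hammingDist v z : ℤ) = r1 - 1 + r3 ∧ (hammingDist v x : ℤ) = r1 - 1 + (r2 + 1)) := by
        intro hc; exact hd (by have := hc.2.2.2.2.2; omega)
      have n3 : ¬ (v ∈ C i ∧ x ∈ C j ∧ z ∈ C k ∧ (hammingDist x z : ℤ) = r2 + (r3 - 1) ∧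
          (hammingDist v z : ℤ) = r1 + (r3 - 1) ∧ (hammingDist v x : ℤ) = r1 + r2) := by
        intro hc; exact hd hc.2.2.2.2.2
      have n4 : ¬ (v ∈ C i ∧ x ∈ C j ∧ z ∈ C k ∧ (hammingDist x z : ℤ) = r2 + (r3 + 1) ∧
          (hammingDist v z : ℤ) = r1 + (r3 + 1) ∧ (hammingDist v x : ℤ) = r1 + r2) := by
        intro hc; exact hd hc.2.2.2.2.2
      rw [if_neg fun hc => hd hc.2.2.2, if_neg n1, if_neg n2, if_neg n3, if_neg n4]
      ring
  · rw [if_neg fun hc => hm ⟨hc.1, hc.2.1, hc.2.2.1⟩,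
      if_neg fun hc => hm ⟨hc.1, hc.2.1, hc.2.2.1⟩,
      if_neg fun hc => hm ⟨hc.1, hc.2.1, hc.2.2.1⟩,
      if_neg fun hc => hm ⟨hc.1, hc.2.1, hc.2.2.1⟩,
      if_neg fun hc => hm ⟨hc.1, hc.2.1, hc.2.2.1⟩]
    ring
end

section
/- For the singleton partition of the n-cube (where S is the 2^n × 2^n adjacency matrix of the n-cube), the vectors T^{r_1,r_2,r_3} over all nonnegative integers r_1, r_2, r_3 with r_1 + r_2 + r_3 ≤ n are linearly independent, and the number of such triples is C(n+3, 3). -/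
/-- For the singleton partition of the `n`-cube, the vector `T^{r_1,r_2,r_3}`,
indexed by triples of vertices `(i,j,k)`, with entry `1` iff `d(i,j) = r_1+r_2`,
`d(j,k) = r_2+r_3`, `d(i,k) = r_1+r_3`. -/
def Tsingleton (n : ℕ) (r1 r2 r3 : ℕ) :
    (Fin n → Bool) × (Fin n → Bool) × (Fin n → Bool) → ℝ :=
  fun t =>
    if hammingDist t.1 t.2.1 = r1 + r2 ∧ hammingDist t.2.1 t.2.2 = r2 + r3 ∧
        hammingDist t.1 t.2.2 = r1 + r3 then 1 else 0

section aux

open Finset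

lemma card_filter_fin (n : ℕ) (p : ℕ → Prop) [DecidablePred p] :
    #({x : Fin n | p ↑x} : Finset (Fin n)) = #((Finset.range n).filter p) := by
  refine Finset.card_bij (fun a _ => (a : ℕ)) ?_ ?_ ?_
  · intro a ha
    simp at ha ⊢
    exact ha
  · intro a _ b _ h
    exact Fin.val_injective h
  · intro b hb
    simp at hb
    exact ⟨⟨b, hb.1⟩, by simp [hb.2]⟩

/-- witness triple of cube vertices at prescribed pairwise distances -/
def wit (n a b c : ℕ) : (Fin n → Bool) × (Fin n → Bool) × (Fin n → Bool) :=
  (fun _ => false, fun t => decide ((t : ℕ) < a + b),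
    fun t => decide ((t : ℕ) < a ∨ (a + b ≤ (t : ℕ) ∧ (t : ℕ) < a + b + c)))

lemma wit_d12 (n a b c : ℕ) (h : a + b + c ≤ n) :
    hammingDist (wit n a b c).1 (wit n a b c).2.1 = a + b := by
  show #{x : Fin n | _} = _
  have : ∀ x : Fin n, ((wit n a b c).1 x ≠ (wit n a b c).2.1 x) ↔ ((x:ℕ) < a + b) := by
    intro x; simp [wit]
  rw [Finset.filter_congr (q := fun x : Fin n => (x:ℕ) < a + b) (fun x _ => by simp [this x])]
  rw [card_filter_fin n (fun m => m < a + b)]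
  have : (Finset.range n).filter (fun m => m < a + b) = Finset.range (a + b) := by
    ext m; simp; omega
  rw [this, Finset.card_range]

lemma wit_d13 (n a b c : ℕ) (h : a + b + c ≤ n) :
    hammingDist (wit n a b c).1 (wit n a b c).2.2 = a + c := by
  show #{x : Fin n | _} = _
  have : ∀ x : Fin n, ((wit n a b c).1 x ≠ (wit n a b c).2.2 x) ↔
      ((x:ℕ) < a ∨ (a + b ≤ (x:ℕ) ∧ (x:ℕ) < a + b + c)) := by
    intro x; simp only [wit, ne_eq, false_eq_decide_iff, not_not, decide_eq_true_eq]
  rw [Finset.filter_congr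
    (q := fun x : Fin n => (x:ℕ) < a ∨ (a + b ≤ (x:ℕ) ∧ (x:ℕ) < a + b + c))
    (fun x _ => by simp [this x])]
  rw [card_filter_fin n (fun m => m < a ∨ (a + b ≤ m ∧ m < a + b + c))]
  have : (Finset.range n).filter (fun m => m < a ∨ (a + b ≤ m ∧ m < a + b + c)) =
      Finset.range a ∪ Finset.Ico (a + b) (a + b + c) := by
    ext m; simp; omega
  rw [this, Finset.card_union_of_disjoint, Finset.card_range, Nat.card_Ico]
  · omega
  · simp [Finset.disjoint_left]; omega

lemma wit_d23 (n a b c : ℕ) (h : a + b + c ≤ n) :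
    hammingDist (wit n a b c).2.1 (wit n a b c).2.2 = b + c := by
  show #{x : Fin n | _} = _
  have : ∀ x : Fin n, ((wit n a b c).2.1 x ≠ (wit n a b c).2.2 x) ↔
      (a ≤ (x:ℕ) ∧ (x:ℕ) < a + b + c) := by
    intro x
    simp only [wit, ne_eq, decide_eq_decide]
    omega
  rw [Finset.filter_congr (q := fun x : Fin n => a ≤ (x:ℕ) ∧ (x:ℕ) < a + b + c)
    (fun x _ => by simp [this x])]
  rw [card_filter_fin n (fun m => a ≤ m ∧ m < a + b + c)]
  have : (Finset.range n).filter (fun m => a ≤ m ∧ m < a + b + c) =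
      Finset.Ico a (a + b + c) := by
    ext m; simp; omega
  rw [this, Nat.card_Ico]
  omega

lemma Teval (n a b c x y z : ℕ) (h : a + b + c ≤ n) :
    Tsingleton n x y z (wit n a b c) =
      if x = a ∧ y = b ∧ z = c then 1 else 0 := by
  unfold Tsingleton
  rw [wit_d12 n a b c h, wit_d23 n a b c h, wit_d13 n a b c h]
  exact if_congr (by omega) rfl rfl

instance finAux (k n : ℕ) : Finite {v : Fin k → ℕ // ∑ i, v i ≤ n} := by
  refine Finite.of_injective (fun v => (fun i => (⟨v.1 i, ?_⟩ : Fin (n + 1)))) ?_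
  · have h1 : v.1 i ≤ ∑ j, v.1 j :=
      Finset.single_le_sum (fun j _ => Nat.zero_le _) (Finset.mem_univ i)
    have := v.2; omega
  · intro a b h
    ext i
    exact congrArg Fin.val (congrFun h i)

lemma card_aux (k n : ℕ) :
    Nat.card {v : Fin k → ℕ // ∑ i, v i ≤ n} = (n + k).choose k := by
  induction k generalizing n with
  | zero =>
    haveI : Unique {v : Fin 0 → ℕ // ∑ i, v i ≤ n} :=
      { default := ⟨fun i => i.elim0, by simp⟩
        uniq := fun v => Subtype.ext (funext fun i => i.elim0) }
    simp [Nat.card_unique]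
  | succ k ih =>
    have e : {v : Fin (k + 1) → ℕ // ∑ i, v i ≤ n} ≃
        Σ a : Fin (n + 1), {v : Fin k → ℕ // ∑ i, v i ≤ n - a} :=
      { toFun := fun v =>
          ⟨⟨v.1 0, by
            have h1 : v.1 0 ≤ ∑ j, v.1 j :=
              Finset.single_le_sum (fun j _ => Nat.zero_le _) (Finset.mem_univ 0)
            have := v.2; omega⟩,
           ⟨fun i => v.1 i.succ, by
            have h2 := v.2
            rw [Fin.sum_univ_succ] at h2
            simp only
            omega⟩⟩
        invFun := fun p =>
          ⟨Fin.cons p.1 p.2.1, by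
            rw [Fin.sum_univ_succ]
            simp only [Fin.cons_zero, Fin.cons_succ]
            have := p.2.2
            have := p.1.isLt
            omega⟩
        left_inv := fun v => Subtype.ext (funext fun i => by
          refine Fin.cases ?_ ?_ i <;> simp)
        right_inv := fun p => by
          rcases p with ⟨a, v⟩
          simp only [Fin.cons_zero, Fin.cons_succ]
          rfl }
    rw [Nat.card_congr e]
    haveI : ∀ a : Fin (n + 1), Fintype {v : Fin k → ℕ // ∑ i, v i ≤ n - (a:ℕ)} :=
      fun a => Fintype.ofFinite _
    rw [Nat.card_eq_fintype_card]
    rw [Fintype.card_sigma]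
    have : ∀ a : Fin (n + 1),
        Fintype.card {v : Fin k → ℕ // ∑ i, v i ≤ n - (a:ℕ)} = (n - (a:ℕ) + k).choose k := by
      intro a
      rw [← Nat.card_eq_fintype_card, ih]
    rw [Finset.sum_congr rfl (fun a _ => this a)]
    rw [Fin.sum_univ_eq_sum_range (fun a => (n - a + k).choose k)]
    rw [← Finset.sum_range_reflect]
    have : ∀ j ∈ Finset.range (n + 1),
        (n - (n + 1 - 1 - j) + k).choose k = (j + k).choose k := by
      intro j hj
      simp at hj
      congr 2
      omega
    rw [Finset.sum_congr rfl this, Nat.sum_range_add_choose]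
    norm_num [Nat.add_assoc]

end aux

/-- the vectors `T^{r_1,r_2,r_3}` over nonnegative `r_1,r_2,r_3` with
`r_1+r_2+r_3 ≤ n` are linearly independent, and there are `C(n+3,3)` such triples. -/
theorem Tsingleton_linearIndependent (n : ℕ) :
    LinearIndependent ℝ
      (fun r : {r : ℕ × ℕ × ℕ // r.1 + r.2.1 + r.2.2 ≤ n} =>
        Tsingleton n r.1.1 r.1.2.1 r.1.2.2) ∧
    Nat.card {r : ℕ × ℕ × ℕ // r.1 + r.2.1 + r.2.2 ≤ n} = Nat.choose (n + 3) 3 := by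
  constructor
  · rw [linearIndependent_iff']
    intro s g hsum i hi
    have h1 := congrFun hsum (wit n i.1.1 i.1.2.1 i.1.2.2)
    simp only [Finset.sum_apply, Pi.smul_apply, smul_eq_mul, Pi.zero_apply] at h1
    rw [Finset.sum_eq_single i] at h1
    · rw [Teval _ _ _ _ _ _ _ i.2] at h1
      simpa using h1
    · intro j _ hji
      rw [Teval _ _ _ _ _ _ _ i.2]
      have : ¬ (j.1.1 = i.1.1 ∧ j.1.2.1 = i.1.2.1 ∧ j.1.2.2 = i.1.2.2) := by
        intro hc
        apply hji
        apply Subtype.ext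
        exact Prod.ext hc.1 (Prod.ext hc.2.1 hc.2.2)
      rw [if_neg this, mul_zero]
    · intro h
      exact absurd hi h
  · have e : {r : ℕ × ℕ × ℕ // r.1 + r.2.1 + r.2.2 ≤ n} ≃
        {v : Fin 3 → ℕ // ∑ i, v i ≤ n} :=
      { toFun := fun r => ⟨![r.1.1, r.1.2.1, r.1.2.2], by
          have := r.2
          simp [Fin.sum_univ_three]
          omega⟩
        invFun := fun v => ⟨(v.1 0, v.1 1, v.1 2), by
          have := v.2
          rw [Fin.sum_univ_three] at this
          simpa using this⟩
        left_inv := fun r => by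
          apply Subtype.ext
          simp
        right_inv := fun v => by
          apply Subtype.ext
          funext i
          fin_cases i <;> simp }
    rw [Nat.card_congr e, card_aux]
end

section
/- The formal power series f(X,Y,Z) = (1+X+Y+Z)^{(n+x+y+z)/4} (1+X−Y−Z)^{(n+x−y−z)/4} (1−X+Y−Z)^{(n−x+y−z)/4} (1−X−Y+Z)^{(n−x−y+z)/4} satisfies the partial differential equation (x − nX) f = (1−X²) ∂f/∂X + (Z−XY) ∂f/∂Y + (Y−XZ) ∂f/∂Z. -/
open Real

/-- the function
`f(X,Y,Z) = (1+X+Y+Z)^{(n+x+y+z)/4} (1+X-Y-Z)^{(n+x-y-z)/4}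
(1-X+Y-Z)^{(n-x+y-z)/4} (1-X-Y+Z)^{(n-x-y+z)/4}`
satisfies `(x - nX) f = (1-X²) ∂f/∂X + (Z-XY) ∂f/∂Y + (Y-XZ) ∂f/∂Z`
near the origin. -/
theorem generating_function_pde (n x y z : ℝ) :
    let f : ℝ → ℝ → ℝ → ℝ := fun X Y Z =>
      (1 + X + Y + Z) ^ ((n + x + y + z) / 4) *
      (1 + X - Y - Z) ^ ((n + x - y - z) / 4) *
      (1 - X + Y - Z) ^ ((n - x + y - z) / 4) *
      (1 - X - Y + Z) ^ ((n - x - y + z) / 4)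
    ∀ X Y Z : ℝ, |X| + |Y| + |Z| < 1 →
      (x - n * X) * f X Y Z =
        (1 - X ^ 2) * deriv (fun X' => f X' Y Z) X
        + (Z - X * Y) * deriv (fun Y' => f X Y' Z) Y
        + (Y - X * Z) * deriv (fun Z' => f X Y Z') Z := by
  intro f X Y Z h
  have hX1 := neg_abs_le X
  have hX2 := le_abs_self X
  have hY1 := neg_abs_le Y
  have hY2 := le_abs_self Y
  have hZ1 := neg_abs_le Z
  have hZ2 := le_abs_self Z
  set p := (n + x + y + z) / 4 with hp
  set q := (n + x - y - z) / 4 with hq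
  set r := (n - x + y - z) / 4 with hr
  set s := (n - x - y + z) / 4 with hs
  have hA : (0:ℝ) < 1 + X + Y + Z := by linarith
  have hB : (0:ℝ) < 1 + X - Y - Z := by linarith
  have hC : (0:ℝ) < 1 - X + Y - Z := by linarith
  have hD : (0:ℝ) < 1 - X - Y + Z := by linarith
  have hA' := hA.ne'
  have hB' := hB.ne'
  have hC' := hC.ne'
  have hD' := hD.ne'
  -- derivatives in X
  have a1 : HasDerivAt (fun X' : ℝ => 1 + X' + Y + Z) 1 X := by
    simpa using (((hasDerivAt_id X).const_add 1).add_const Y).add_const Z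
  have a2 : HasDerivAt (fun X' : ℝ => 1 + X' - Y - Z) 1 X := by
    simpa using (((hasDerivAt_id X).const_add 1).sub_const Y).sub_const Z
  have a3 : HasDerivAt (fun X' : ℝ => 1 - X' + Y - Z) (-1) X := by
    simpa using (((hasDerivAt_id X).const_sub 1).add_const Y).sub_const Z
  have a4 : HasDerivAt (fun X' : ℝ => 1 - X' - Y + Z) (-1) X := by
    simpa using (((hasDerivAt_id X).const_sub 1).sub_const Y).add_const Z
  have b1 : HasDerivAt (fun Y' : ℝ => 1 + X + Y' + Z) 1 Y := by
    simpa using ((hasDerivAt_id Y).const_add (1 + X)).add_const Z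
  have b2 : HasDerivAt (fun Y' : ℝ => 1 + X - Y' - Z) (-1) Y := by
    simpa using ((hasDerivAt_id Y).const_sub (1 + X)).sub_const Z
  have b3 : HasDerivAt (fun Y' : ℝ => 1 - X + Y' - Z) 1 Y := by
    simpa using ((hasDerivAt_id Y).const_add (1 - X)).sub_const Z
  have b4 : HasDerivAt (fun Y' : ℝ => 1 - X - Y' + Z) (-1) Y := by
    simpa using ((hasDerivAt_id Y).const_sub (1 - X)).add_const Z
  have c1 : HasDerivAt (fun Z' : ℝ => 1 + X + Y + Z') 1 Z := by
    simpa using (hasDerivAt_id Z).const_add (1 + X + Y)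
  have c2 : HasDerivAt (fun Z' : ℝ => 1 + X - Y - Z') (-1) Z := by
    simpa using (hasDerivAt_id Z).const_sub (1 + X - Y)
  have c3 : HasDerivAt (fun Z' : ℝ => 1 - X + Y - Z') (-1) Z := by
    simpa using (hasDerivAt_id Z).const_sub (1 - X + Y)
  have c4 : HasDerivAt (fun Z' : ℝ => 1 - X - Y + Z') 1 Z := by
    simpa using (hasDerivAt_id Z).const_add (1 - X - Y)
  have ra1 := a1.rpow_const (p := p) (Or.inl hA')
  have ra2 := a2.rpow_const (p := q) (Or.inl hB')
  have ra3 := a3.rpow_const (p := r) (Or.inl hC')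
  have ra4 := a4.rpow_const (p := s) (Or.inl hD')
  have rb1 := b1.rpow_const (p := p) (Or.inl hA')
  have rb2 := b2.rpow_const (p := q) (Or.inl hB')
  have rb3 := b3.rpow_const (p := r) (Or.inl hC')
  have rb4 := b4.rpow_const (p := s) (Or.inl hD')
  have rc1 := c1.rpow_const (p := p) (Or.inl hA')
  have rc2 := c2.rpow_const (p := q) (Or.inl hB')
  have rc3 := c3.rpow_const (p := r) (Or.inl hC')
  have rc4 := c4.rpow_const (p := s) (Or.inl hD')
  have dX := (((ra1.mul ra2).mul ra3).mul ra4).deriv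
  have dY := (((rb1.mul rb2).mul rb3).mul rb4).deriv
  have dZ := (((rc1.mul rc2).mul rc3).mul rc4).deriv
  simp only [f]
  erw [dX, dY, dZ]
  simp only [Pi.mul_apply]
  rw [Real.rpow_sub_one hA' p, Real.rpow_sub_one hB' q,
      Real.rpow_sub_one hC' r, Real.rpow_sub_one hD' s]
  rw [hp, hq, hr, hs]
  field_simp
  ring
end

section
/- Define polynomials P^{r_1,r_2,r_3}(x,y,z) by the recursion: P^{0,0,0} = 1, P^{r_1,r_2,r_3} = 0 if any index is negative, and x·P^{r_1,r_2,r_3} = (r_2+1)P^{r_1,r_2+1,r_3−1} + (r_3+1)P^{r_1,r_2−1,r_3+1} + (n−r_1−r_2−r_3+1)P^{r_1−1,r_2,r_3} + (r_1+1)P^{r_1+1,r_2,r_3} (solving for the underlined last term), together with the symmetric recursions in the other two variables. Then P^{r,0,0}(x,y,z) = K_r((n−x)/2), where K_r(t) = Σ_i (−1)^i C(t,i) C(n−t, r−i) is the Krawtchouk polynomial of degree r. -/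
/-- Generalized binomial coefficient `C(t,i) = t(t-1)⋯(t-i+1)/i!` for real `t`. -/
noncomputable def gchoose (t : ℝ) (i : ℕ) : ℝ :=
  (∏ j ∈ Finset.range i, (t - j)) / (Nat.factorial i)

/-- The Krawtchouk polynomial `K_r(t) = Σ_i (-1)^i C(t,i) C(n-t, r-i)`. -/
noncomputable def krawtchouk (n : ℕ) (r : ℕ) (t : ℝ) : ℝ :=
  ∑ i ∈ Finset.range (r + 1), (-1 : ℝ) ^ i * gchoose t i * gchoose (n - t) (r - i)

lemma gchoose_succ (t : ℝ) (i : ℕ) : ((i:ℝ)+1) * gchoose t (i+1) = (t - i) * gchoose t i := by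
  have h1 : (Nat.factorial i : ℝ) ≠ 0 := Nat.cast_ne_zero.mpr (Nat.factorial_ne_zero i)
  simp only [gchoose, Finset.prod_range_succ, Nat.factorial_succ, Nat.cast_mul,
    Nat.cast_add, Nat.cast_one]
  field_simp

lemma factA (t s : ℝ) (k : ℕ) :
    ∑ i ∈ Finset.range (k+2), (-1:ℝ)^i * i * gchoose t i * gchoose s (k+1-i)
    = ∑ i ∈ Finset.range (k+1), (-1:ℝ)^(i+1) * (t - i) * gchoose t i * gchoose s (k-i) := by
  rw [Finset.sum_range_succ']
  simp only [Nat.cast_zero, mul_zero, zero_mul, add_zero, pow_zero, one_mul]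
  refine Finset.sum_congr rfl ?_
  intro i hi
  have hi' : i ≤ k := by simpa [Nat.lt_succ_iff] using hi
  have h2 : k + 1 - (i+1) = k - i := by omega
  rw [h2]
  have h := gchoose_succ t i
  push_cast
  linear_combination ((-1:ℝ)^(i+1) * gchoose s (k-i)) * h

lemma factB (t s : ℝ) (k : ℕ) :
    ∑ i ∈ Finset.range (k+2), (-1:ℝ)^i * ((k:ℝ)+1-i) * gchoose t i * gchoose s (k+1-i)
    = ∑ i ∈ Finset.range (k+1), (-1:ℝ)^i * (s - ((k:ℝ)-i)) * gchoose t i * gchoose s (k-i) := by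
  rw [Finset.sum_range_succ]
  rw [show ((k:ℝ)+1-(↑(k+1))) = 0 by push_cast; ring]
  simp only [mul_zero, zero_mul, add_zero]
  refine Finset.sum_congr rfl ?_
  intro i hi
  have hi' : i ≤ k := by simpa [Nat.lt_succ_iff] using hi
  have h2 : k + 1 - i = (k - i) + 1 := by omega
  rw [h2]
  have h := gchoose_succ s (k-i)
  have hc : ((k-i : ℕ) : ℝ) = (k:ℝ) - i := by rw [Nat.cast_sub hi']
  rw [hc] at h
  linear_combination ((-1:ℝ)^i * gchoose t i) * h

lemma kraw_rec (n : ℕ) (t : ℝ) (m : ℕ) :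
    ((m:ℝ)+2) * krawtchouk n (m+2) t
      = ((n:ℝ) - 2*t) * krawtchouk n (m+1) t - ((n:ℝ) - m) * krawtchouk n m t := by
  set s : ℝ := (n:ℝ) - t with hs
  have eA := factA t s (m+1)
  have eB := factB t s (m+1)
  simp only [show m+1+2 = m+3 from rfl, show m+1+1 = m+2 from rfl] at eA eB
  have e0 : ((m:ℝ)+2) * krawtchouk n (m+2) t
      = (∑ i ∈ Finset.range (m+3), (-1:ℝ)^i * i * gchoose t i * gchoose s (m+2-i))
      + (∑ i ∈ Finset.range (m+3), (-1:ℝ)^i * (((m+1:ℕ):ℝ)+1-i) * gchoose t i * gchoose s (m+2-i)) := by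
    rw [krawtchouk, Finset.mul_sum, ← Finset.sum_add_distrib]
    refine Finset.sum_congr rfl ?_
    intro i _
    push_cast
    ring
  have e1 : (∑ i ∈ Finset.range (m+2), (-1:ℝ)^(i+1) * (t - i) * gchoose t i * gchoose s (m+1-i))
      + (∑ i ∈ Finset.range (m+2), (-1:ℝ)^i * (s - (((m+1:ℕ):ℝ)-i)) * gchoose t i * gchoose s (m+1-i))
      = (s - t) * krawtchouk n (m+1) t
        + ((∑ i ∈ Finset.range (m+2), (-1:ℝ)^i * i * gchoose t i * gchoose s (m+1-i))
          - (∑ i ∈ Finset.range (m+2), (-1:ℝ)^i * ((m:ℝ)+1-i) * gchoose t i * gchoose s (m+1-i))) := by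
    rw [krawtchouk, Finset.mul_sum, ← Finset.sum_sub_distrib, ← Finset.sum_add_distrib,
      ← Finset.sum_add_distrib]
    refine Finset.sum_congr rfl ?_
    intro i _
    push_cast
    ring
  have e2 : (∑ i ∈ Finset.range (m+2), (-1:ℝ)^i * i * gchoose t i * gchoose s (m+1-i))
      - (∑ i ∈ Finset.range (m+2), (-1:ℝ)^i * ((m:ℝ)+1-i) * gchoose t i * gchoose s (m+1-i))
      = ((m:ℝ) - n) * krawtchouk n m t := by
    rw [factA t s m, factB t s m, krawtchouk, Finset.mul_sum, ← Finset.sum_sub_distrib]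
    refine Finset.sum_congr rfl ?_
    intro i _
    rw [hs]
    push_cast
    ring
  rw [e0, eA, eB, e1, e2, hs]
  ring

lemma kraw_zero (n : ℕ) (t : ℝ) : krawtchouk n 0 t = 1 := by
  simp [krawtchouk, gchoose]

lemma kraw_one (n : ℕ) (t : ℝ) : krawtchouk n 1 t = (n:ℝ) - 2*t := by
  simp [krawtchouk, gchoose, Finset.sum_range_succ]
  ring

/-- if the polynomials `P^{r_1,r_2,r_3}` satisfy `P^{0,0,0} = 1`,
vanish for negative indices, and satisfy the three symmetric recursions, then
`P^{r,0,0}(x,y,z) = K_r((n-x)/2)`, the Krawtchouk polynomial. -/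
theorem P_r00_eq_krawtchouk (n : ℕ) (P : ℤ → ℤ → ℤ → ℝ → ℝ → ℝ → ℝ)
    (hP0 : ∀ x y z : ℝ, P 0 0 0 x y z = 1)
    (hneg : ∀ r1 r2 r3 : ℤ, (r1 < 0 ∨ r2 < 0 ∨ r3 < 0) →
      ∀ x y z : ℝ, P r1 r2 r3 x y z = 0)
    (hrecx : ∀ r1 r2 r3 : ℤ, 0 ≤ r1 → 0 ≤ r2 → 0 ≤ r3 → ∀ x y z : ℝ,
      x * P r1 r2 r3 x y z =
        (r2 + 1) * P r1 (r2 + 1) (r3 - 1) x y z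
        + (r3 + 1) * P r1 (r2 - 1) (r3 + 1) x y z
        + ((n : ℝ) - r1 - r2 - r3 + 1) * P (r1 - 1) r2 r3 x y z
        + (r1 + 1) * P (r1 + 1) r2 r3 x y z)
    (hrecy : ∀ r1 r2 r3 : ℤ, 0 ≤ r1 → 0 ≤ r2 → 0 ≤ r3 → ∀ x y z : ℝ,
      y * P r1 r2 r3 x y z =
        (r1 + 1) * P (r1 + 1) r2 (r3 - 1) x y z
        + (r3 + 1) * P (r1 - 1) r2 (r3 + 1) x y z
        + ((n : ℝ) - r1 - r2 - r3 + 1) * P r1 (r2 - 1) r3 x y z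
        + (r2 + 1) * P r1 (r2 + 1) r3 x y z)
    (hrecz : ∀ r1 r2 r3 : ℤ, 0 ≤ r1 → 0 ≤ r2 → 0 ≤ r3 → ∀ x y z : ℝ,
      z * P r1 r2 r3 x y z =
        (r1 + 1) * P (r1 + 1) (r2 - 1) r3 x y z
        + (r2 + 1) * P (r1 - 1) (r2 + 1) r3 x y z
        + ((n : ℝ) - r1 - r2 - r3 + 1) * P r1 r2 (r3 - 1) x y z
        + (r3 + 1) * P r1 r2 (r3 + 1) x y z) :
    ∀ (r : ℕ) (x y z : ℝ), P r 0 0 x y z = krawtchouk n r ((n - x) / 2) := by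
  intro r x y z
  set t : ℝ := ((n:ℝ) - x) / 2 with ht
  have hx : (n:ℝ) - 2*t = x := by rw [ht]; ring
  -- the step recursion: for any r : ℕ,
  have step : ∀ r : ℕ, x * P r 0 0 x y z
      = ((n:ℝ) - r + 1) * P ((r:ℤ) - 1) 0 0 x y z + ((r:ℝ) + 1) * P ((r:ℤ) + 1) 0 0 x y z := by
    intro r
    have h := hrecx (r:ℤ) 0 0 (Int.natCast_nonneg r) le_rfl le_rfl x y z
    have h1 : P (r:ℤ) (0+1) (0-1) x y z = 0 := hneg _ _ _ (by right; right; norm_num) x y z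
    have h2 : P (r:ℤ) (0-1) (0+1) x y z = 0 := hneg _ _ _ (by right; left; norm_num) x y z
    rw [h1, h2] at h
    push_cast at h ⊢
    linarith [h]
  have key : ∀ r : ℕ, P r 0 0 x y z = krawtchouk n r t ∧
      P ((r:ℤ)+1) 0 0 x y z = krawtchouk n (r+1) t := by
    intro r
    induction r with
    | zero =>
      constructor
      · simp only [Nat.cast_zero]
        rw [hP0, kraw_zero]
      · have h := step 0
        simp only [Nat.cast_zero, Nat.cast_ofNat] at h
        have hm : P ((0:ℤ) - 1) 0 0 x y z = 0 := hneg _ _ _ (by left; norm_num) x y z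
        rw [hm, hP0] at h
        simp only [Nat.cast_zero]
        rw [kraw_one, hx]
        linarith [h]
    | succ m ih =>
      obtain ⟨ih1, ih2⟩ := ih
      refine ⟨by push_cast; exact ih2, ?_⟩
      have h := step (m+1)
      push_cast at h
      have hm : ((m:ℤ)+1) - 1 = (m:ℤ) := by ring
      rw [hm, ih1, ih2] at h
      have h3 := kraw_rec n t m
      rw [hx] at h3
      have hne : ((m:ℝ)+2) ≠ 0 := by positivity
      have hfin : P ((m:ℤ)+1+1) 0 0 x y z = krawtchouk n (m+2) t := by
        apply mul_left_cancel₀ hne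
        rw [h3]
        linear_combination -h
      push_cast
      exact hfin
  exact (key r).1
end
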